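/- The absolute value function x ↦ |x|, as a total function ℝ → ℝ, is poly-length-computable. -/

import Mathlib

/-- The length of the curve `y` between times `0` and `t`
(using one-sided derivatives on `[0, ∞)` and the sup norm). -/
noncomputable def curveLen {d : ℕ} (y : ℝ → Fin d → ℝ) (t : ℝ) : ℝ :=
  ∫ u in (0:ℝ)..t, ‖derivWithin y (Set.Ici 0) u‖



noncomputable def absV (X t : ℝ) : ℝ := (X^2-1)/2 * Real.exp (-(X^2+1)^2 * t)
noncomputable def absS (X t : ℝ) : ℝ := Real.sqrt (X^2 + (absV X t)^2)
noncomputable def absC (X t : ℝ) : ℝ := (X^2+1) * absV X t / absS X t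
noncomputable def absY (X : ℝ) : ℝ → Fin 4 → ℝ :=
  fun t => ![absS X t, absC X t, X^2+1, t]
noncomputable def absG (X : ℝ) : ℝ → Fin 4 → ℝ :=
  fun t => ![-absS X t * absC X t^2, -absC X t * ((X^2+1)^2 - absC X t^2), 0, 1]
noncomputable def absP : Fin 4 → MvPolynomial (Fin 4) ℚ :=
  ![-(MvPolynomial.X 0 * MvPolynomial.X 1 ^ 2),
    -(MvPolynomial.X 1 * ((MvPolynomial.X 2)^2 - (MvPolynomial.X 1)^2)), 0, 1]
noncomputable def absQ : Fin 4 → MvPolynomial (Fin 1) ℚ :=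
  ![MvPolynomial.C (1/2 : ℚ) * (MvPolynomial.X 0 ^ 2 + 1),
    MvPolynomial.X 0 ^ 2 - 1, MvPolynomial.X 0 ^ 2 + 1, 0]
noncomputable def absΩ : MvPolynomial (Fin 2) ℝ :=
  (MvPolynomial.X 0 ^ 2 + 1)^3 * (MvPolynomial.X 1 + MvPolynomial.X 0 ^ 2 + 1)

lemma eval_absΩ (α μ : ℝ) :
    MvPolynomial.eval ![α, μ] absΩ = (α^2+1)^3 * (μ + α^2 + 1) := by
  simp [absΩ]

lemma aeval_absP0 (z : Fin 4 → ℝ) :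
    MvPolynomial.aeval z (absP 0) = -(z 0 * z 1^2) := by simp [absP]
lemma aeval_absP1 (z : Fin 4 → ℝ) :
    MvPolynomial.aeval z (absP 1) = -(z 1 * ((z 2)^2 - (z 1)^2)) := by simp [absP]
lemma aeval_absP2 (z : Fin 4 → ℝ) :
    MvPolynomial.aeval z (absP 2) = 0 := by simp [absP]
lemma aeval_absP3 (z : Fin 4 → ℝ) :
    MvPolynomial.aeval z (absP 3) = 1 := by simp [absP]

lemma aeval_absQ0 (z : Fin 1 → ℝ) :
    MvPolynomial.aeval z (absQ 0) = (z 0^2 + 1)/2 := by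
  simp [absQ]; ring
lemma aeval_absQ1 (z : Fin 1 → ℝ) :
    MvPolynomial.aeval z (absQ 1) = z 0^2 - 1 := by simp [absQ]
lemma aeval_absQ2 (z : Fin 1 → ℝ) :
    MvPolynomial.aeval z (absQ 2) = z 0^2 + 1 := by simp [absQ]
lemma aeval_absQ3 (z : Fin 1 → ℝ) :
    MvPolynomial.aeval z (absQ 3) = 0 := by simp [absQ]


lemma absVsq_pos (X t : ℝ) : 0 < X^2 + (absV X t)^2 := by
  rcases eq_or_ne X 0 with h | h
  · subst h
    have hv : absV 0 t ≠ 0 := by simp [absV]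
    have h2 : 0 < |absV 0 t|^2 := pow_pos (abs_pos.2 hv) 2
    rw [sq_abs] at h2
    nlinarith
  · positivity

lemma sq_absS (X t : ℝ) : (absS X t)^2 = X^2 + (absV X t)^2 :=
  Real.sq_sqrt (absVsq_pos X t).le

lemma absS_pos (X t : ℝ) : 0 < absS X t := Real.sqrt_pos.2 (absVsq_pos X t)

lemma abs_le_absS (X t : ℝ) : |X| ≤ absS X t := by
  rw [← Real.sqrt_sq_eq_abs]
  exact Real.sqrt_le_sqrt (le_add_of_nonneg_right (sq_nonneg _))

lemma absV_le_absS (X t : ℝ) : |absV X t| ≤ absS X t := by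
  rw [← Real.sqrt_sq_eq_abs]
  exact Real.sqrt_le_sqrt (le_add_of_nonneg_left (sq_nonneg _))

lemma absV_le (X t : ℝ) (ht : 0 ≤ t) : |absV X t| ≤ (X^2+1)/2 := by
  have h1 : |absV X t| = |(X^2-1)/2| * Real.exp (-(X^2+1)^2 * t) := by
    rw [absV, abs_mul, abs_of_pos (Real.exp_pos _)]
  rw [h1]
  have h2 : |(X^2-1)/2| ≤ (X^2+1)/2 := by
    rw [abs_div, abs_of_pos (by norm_num : (0:ℝ) < 2)]
    apply div_le_div_of_nonneg_right ?_ (by norm_num)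
    · rw [abs_le]; constructor <;> nlinarith [sq_nonneg X]
  calc |(X^2-1)/2| * Real.exp (-(X^2+1)^2 * t) ≤ (X^2+1)/2 * 1 := by
        apply mul_le_mul h2 ?_ (Real.exp_pos _).le (by positivity)
        exact Real.exp_le_one_iff.2 (by nlinarith [sq_nonneg (X^2+1)])
    _ = (X^2+1)/2 := mul_one _

lemma absV_le_exp (X t : ℝ) (ht : 0 ≤ t) : |absV X t| ≤ (X^2+1) * Real.exp (-t) := by
  have h1 : |absV X t| = |(X^2-1)/2| * Real.exp (-(X^2+1)^2 * t) := by
    rw [absV, abs_mul, abs_of_pos (Real.exp_pos _)]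
  rw [h1]
  have h2 : |(X^2-1)/2| ≤ X^2+1 := by
    rw [abs_div, abs_of_pos (by norm_num : (0:ℝ) < 2), div_le_iff₀ (by norm_num)]
    rw [abs_le]; constructor <;> nlinarith [sq_nonneg X]
  have h3 : Real.exp (-(X^2+1)^2 * t) ≤ Real.exp (-t) := by
    apply Real.exp_le_exp.2
    nlinarith [sq_nonneg X, sq_nonneg (X^2)]
  exact mul_le_mul h2 h3 (Real.exp_pos _).le (by positivity)

lemma hasDerivAt_absV (X t : ℝ) :
    HasDerivAt (absV X) (-(X^2+1)^2 * absV X t) t := by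
  have h : HasDerivAt (fun u : ℝ => -(X^2+1)^2 * u) (-(X^2+1)^2) t := by
    simpa using (hasDerivAt_id t).const_mul (-(X^2+1)^2)
  have h3 := (h.exp).const_mul ((X^2-1)/2)
  convert h3 using 1
  rfl
  rfl
  rfl
  rw [absV]; ring

lemma hasDerivAt_absS (X t : ℝ) :
    HasDerivAt (absS X) (-(absS X t) * (absC X t)^2) t := by
  have hg : HasDerivAt (fun t => X^2 + (absV X t)^2)
      ((2:ℕ) * absV X t ^ 1 * (-(X^2+1)^2 * absV X t)) t :=
    ((hasDerivAt_absV X t).pow 2).const_add (X^2)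
  have hs := (Real.hasDerivAt_sqrt (absVsq_pos X t).ne').comp t hg
  have hne := (absS_pos X t).ne'
  convert hs using 1
  rfl
  rfl
  rfl
  rw [absC, show Real.sqrt (X^2 + (absV X t)^2) = absS X t from rfl]
  push_cast
  field_simp

lemma hasDerivAt_absC (X t : ℝ) :
    HasDerivAt (absC X) (-(absC X t) * ((X^2+1)^2 - (absC X t)^2)) t := by
  have hnum : HasDerivAt (fun t => (X^2+1) * absV X t)
      ((X^2+1) * (-(X^2+1)^2 * absV X t)) t := (hasDerivAt_absV X t).const_mul _
  have hne := (absS_pos X t).ne'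
  have hd := hnum.div (hasDerivAt_absS X t) hne
  convert hd using 1
  rfl
  rfl
  rfl
  rw [absC]
  field_simp
  ring

lemma absV_zero (X : ℝ) : absV X 0 = (X^2-1)/2 := by simp [absV]

lemma absS_zero (X : ℝ) : absS X 0 = (X^2+1)/2 := by
  rw [absS, absV_zero, show X^2 + ((X^2-1)/2)^2 = ((X^2+1)/2)^2 from by ring]
  exact Real.sqrt_sq (by positivity)

lemma absC_zero (X : ℝ) : absC X 0 = X^2 - 1 := by
  have h : (X:ℝ)^2 + 1 ≠ 0 := by positivity
  rw [absC, absV_zero, absS_zero]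
  field_simp

lemma absC_abs_le (X t : ℝ) : |absC X t| ≤ X^2 + 1 := by
  rw [absC, abs_div, abs_mul, abs_of_pos (show (0:ℝ) < X^2+1 by positivity),
    abs_of_pos (absS_pos X t), div_le_iff₀ (absS_pos X t)]
  nlinarith [absV_le_absS X t, absS_pos X t, sq_nonneg X]

lemma absSC_le (X t : ℝ) (ht : 0 ≤ t) : absS X t * (absC X t)^2 ≤ (X^2+1)^3 := by
  have hne := (absS_pos X t).ne'
  have h1 : absS X t * (absC X t)^2 = (X^2+1)^2 * ((absV X t)^2 / absS X t) := by
    rw [absC]; field_simp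
  have h2 : (absV X t)^2 / absS X t ≤ |absV X t| := by
    rw [div_le_iff₀ (absS_pos X t)]
    nlinarith [absV_le_absS X t, abs_nonneg (absV X t), sq_abs (absV X t)]
  rw [h1]
  nlinarith [mul_le_mul_of_nonneg_left h2 (by positivity : (0:ℝ) ≤ (X^2+1)^2),
    mul_le_mul_of_nonneg_left (absV_le X t ht) (by positivity : (0:ℝ) ≤ (X^2+1)^2),
    sq_nonneg X, sq_nonneg (X^2), sq_nonneg (X^3)]

lemma absC_bound2 (X t : ℝ) : |absC X t * ((X^2+1)^2 - (absC X t)^2)| ≤ (X^2+1)^3 := by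
  have h1 := absC_abs_le X t
  have h3 : |(X^2+1)^2 - (absC X t)^2| ≤ (X^2+1)^2 := by
    have hsq : (absC X t)^2 ≤ (X^2+1)^2 := by
      nlinarith [mul_le_mul h1 h1 (abs_nonneg _) (by positivity : (0:ℝ) ≤ X^2+1),
        abs_mul_abs_self (absC X t), sq_abs (absC X t)]
    rw [abs_le]
    constructor
    · nlinarith [sq_nonneg (X^2+1)]
    · nlinarith [sq_nonneg (absC X t)]
  rw [abs_mul]
  calc |absC X t| * |(X^2+1)^2 - (absC X t)^2| ≤ (X^2+1) * (X^2+1)^2 :=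
      mul_le_mul h1 h3 (abs_nonneg _) (by positivity)
    _ = (X^2+1)^3 := by ring

lemma absS_sub_le (X t : ℝ) : absS X t - |X| ≤ |absV X t| := by
  have h : absS X t ≤ |X| + |absV X t| := by
    rw [absS, show |X| + |absV X t| = Real.sqrt ((|X| + |absV X t|)^2) from
      (Real.sqrt_sq (by positivity)).symm]
    apply Real.sqrt_le_sqrt
    nlinarith [abs_nonneg X, abs_nonneg (absV X t), sq_abs X, sq_abs (absV X t)]
  linarith

lemma self_mul_exp_neg_le_one (a : ℝ) : a * Real.exp (-a) ≤ 1 := by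
  rw [Real.exp_neg, ← div_eq_mul_inv, div_le_one (Real.exp_pos _)]
  linarith [Real.add_one_le_exp a]

lemma continuous_absV (X : ℝ) : Continuous (absV X) :=
  continuous_const.mul (Real.continuous_exp.comp (continuous_const.mul continuous_id))

lemma continuous_absS (X : ℝ) : Continuous (absS X) :=
  Real.continuous_sqrt.comp (continuous_const.add ((continuous_absV X).pow 2))

lemma continuous_absC (X : ℝ) : Continuous (absC X) :=
  (continuous_const.mul (continuous_absV X)).div (continuous_absS X)
    fun t => (absS_pos X t).ne'

lemma continuous_absG (X : ℝ) : Continuous (absG X) := by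
  apply continuous_pi
  intro i
  fin_cases i
  · simp [absG]; exact ((continuous_absS X).mul ((continuous_absC X).pow 2)).neg
  · simp [absG]; exact ((continuous_absC X).mul
      (continuous_const.sub ((continuous_absC X).pow 2))).neg
  · simpa [absG] using (continuous_const : Continuous fun _ : ℝ => (0:ℝ))
  · simpa [absG] using (continuous_const : Continuous fun _ : ℝ => (1:ℝ))

lemma hasDerivAt_absY (X t : ℝ) : HasDerivAt (absY X) (absG X t) t := by
  rw [hasDerivAt_pi]
  intro i
  fin_cases i
  · simpa [absY, absG] using hasDerivAt_absS X t
  · simpa [absY, absG] using hasDerivAt_absC X t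
  · simpa [absY, absG] using hasDerivAt_const t (X^2)
  · simpa [absY, absG] using hasDerivAt_id' t

lemma absG_norm_ge_one (X u : ℝ) : 1 ≤ ‖absG X u‖ := by
  have h := norm_le_pi_norm (absG X u) 3
  simpa [absG] using h

lemma absG_norm_le (X u : ℝ) (hu : 0 ≤ u) : ‖absG X u‖ ≤ (X^2+1)^3 := by
  rw [pi_norm_le_iff_of_nonneg (by positivity)]
  intro i
  fin_cases i
  · show ‖absG X u 0‖ ≤ _
    rw [show absG X u 0 = -(absS X u * absC X u^2) from by simp [absG],
      Real.norm_eq_abs, abs_neg, abs_of_nonneg (mul_nonneg (absS_pos X u).le (sq_nonneg _))]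
    exact absSC_le X u hu
  · show ‖absG X u 1‖ ≤ _
    rw [show absG X u 1 = -(absC X u * ((X^2+1)^2 - absC X u^2)) from by simp [absG],
      Real.norm_eq_abs, abs_neg]
    exact absC_bound2 X u
  · show ‖absG X u 2‖ ≤ _
    rw [show absG X u 2 = 0 from by simp [absG]]
    simpa using (by positivity : (0:ℝ) ≤ (X^2+1)^3)
  · show ‖absG X u 3‖ ≤ _
    rw [show absG X u 3 = 1 from by simp [absG]]
    have h1 : (1:ℝ) ≤ (X^2+1)^3 := by nlinarith [sq_nonneg X, sq_nonneg (X^2), sq_nonneg (X^3)]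
    simpa using h1

lemma curveLen_absY (X t : ℝ) (ht : 0 ≤ t) :
    curveLen (absY X) t = ∫ u in (0:ℝ)..t, ‖absG X u‖ := by
  apply intervalIntegral.integral_congr
  intro u hu
  rw [Set.uIcc_of_le ht] at hu
  have h := (hasDerivAt_absY X u).hasDerivWithinAt (s := Set.Ici 0)
  simp only
  rw [h.derivWithin ((uniqueDiffOn_Ici 0) u hu.1)]

lemma le_curveLen (X t : ℝ) (ht : 0 ≤ t) : t ≤ curveLen (absY X) t := by
  rw [curveLen_absY X t ht]
  calc t = ∫ _u in (0:ℝ)..t, (1:ℝ) := by simp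
    _ ≤ ∫ u in (0:ℝ)..t, ‖absG X u‖ := by
        apply intervalIntegral.integral_mono_on ht intervalIntegrable_const
          (((continuous_absG X).norm).intervalIntegrable _ _)
        intro u _
        exact absG_norm_ge_one X u

lemma curveLen_le (X t : ℝ) (ht : 0 ≤ t) : curveLen (absY X) t ≤ t * (X^2+1)^3 := by
  rw [curveLen_absY X t ht]
  calc (∫ u in (0:ℝ)..t, ‖absG X u‖) ≤ ∫ _u in (0:ℝ)..t, (X^2+1)^3 := by
        apply intervalIntegral.integral_mono_on ht
          (((continuous_absG X).norm).intervalIntegrable _ _) intervalIntegrable_const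
        intro u hu
        exact absG_norm_le X u hu.1
    _ = t * (X^2+1)^3 := by simp

/-- `f :⊆ ℝⁿ → ℝᵐ` with domain `dom` is poly-length-computable. -/
def PolyLengthComputable (n m : ℕ) (dom : Set (Fin n → ℝ))
    (f : (Fin n → ℝ) → Fin m → ℝ) : Prop :=
  ∃ (d : ℕ) (hd : m ≤ d) (p : Fin d → MvPolynomial (Fin d) ℚ)
    (q : Fin d → MvPolynomial (Fin n) ℚ) (Ω : MvPolynomial (Fin 2) ℝ),
    (∀ α μ : ℝ, 0 ≤ α → 0 ≤ μ → 0 ≤ MvPolynomial.eval ![α, μ] Ω) ∧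
    ∀ x ∈ dom, ∃ y : ℝ → Fin d → ℝ,
      (∀ i, y 0 i = MvPolynomial.aeval x (q i)) ∧
      (∀ t : ℝ, 0 ≤ t →
        HasDerivWithinAt y (fun i => MvPolynomial.aeval (y t) (p i)) (Set.Ici 0) t) ∧
      (∀ t : ℝ, 0 ≤ t → ∀ μ : ℝ, 0 ≤ μ →
        MvPolynomial.eval ![‖x‖, μ] Ω ≤ curveLen y t →
        ‖(fun j : Fin m => y t (Fin.castLE hd j)) - f x‖ ≤ Real.exp (-μ)) ∧
      (∀ t : ℝ, 0 ≤ t → t ≤ curveLen y t)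

/-- The absolute value function, as a total function ℝ → ℝ, is poly-length-computable. -/
theorem abs_polyLengthComputable :
    PolyLengthComputable 1 1 Set.univ (fun x _ => |x 0|) := by
  refine ⟨4, by norm_num, absP, absQ, absΩ, ?_, ?_⟩
  · intro α μ hα hμ
    rw [eval_absΩ]
    apply mul_nonneg (by positivity)
    nlinarith [sq_nonneg α]
  · intro x _
    set X := x 0 with hX
    have hnorm : ‖x‖ = |X| := by
      apply le_antisymm
      · apply (pi_norm_le_iff_of_nonneg (abs_nonneg _)).2
        intro i
        rw [Fin.eq_zero i]
        exact le_of_eq (Real.norm_eq_abs _)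
      · simpa using norm_le_pi_norm x 0
    refine ⟨absY X, ?_, ?_, ?_, fun t ht => le_curveLen X t ht⟩
    · intro i
      fin_cases i
      · show absY X 0 0 = MvPolynomial.aeval x (absQ 0)
        rw [show absY X 0 0 = absS X 0 from by simp [absY], absS_zero, aeval_absQ0, ← hX]
      · show absY X 0 1 = MvPolynomial.aeval x (absQ 1)
        rw [show absY X 0 1 = absC X 0 from by simp [absY], absC_zero, aeval_absQ1, ← hX]
      · show absY X 0 2 = MvPolynomial.aeval x (absQ 2)
        rw [show absY X 0 2 = X^2+1 from by simp [absY], aeval_absQ2, ← hX]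
      · show absY X 0 3 = MvPolynomial.aeval x (absQ 3)
        rw [show absY X 0 3 = (0:ℝ) from by simp [absY], aeval_absQ3]
    · intro t ht
      have he : (fun i => (MvPolynomial.aeval (absY X t) (absP i) : ℝ)) = absG X t := by
        funext i
        fin_cases i
        · rw [show (⟨0, by norm_num⟩ : Fin 4) = 0 from rfl, aeval_absP0]
          simp [absY, absG]
        · rw [show (⟨1, by norm_num⟩ : Fin 4) = 1 from rfl, aeval_absP1]
          simp [absY, absG]
        · rw [show (⟨2, by norm_num⟩ : Fin 4) = 2 from rfl, aeval_absP2]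
          simp [absG]
        · rw [show (⟨3, by norm_num⟩ : Fin 4) = 3 from rfl, aeval_absP3]
          simp [absG]
      rw [he]
      exact (hasDerivAt_absY X t).hasDerivWithinAt
    · intro t ht μ hμ hΩ
      rw [eval_absΩ] at hΩ
      have hx2 : ‖x‖^2 = X^2 := by rw [hnorm, sq_abs]
      rw [hx2] at hΩ
      have hup := curveLen_le X t ht
      have hpos : (0:ℝ) < (X^2+1)^3 := by positivity
      have htb : μ + X^2 + 1 ≤ t := by
        have h1 : (X^2+1)^3 * (μ + X^2 + 1) ≤ t * (X^2+1)^3 := le_trans hΩ hup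
        nlinarith
      rw [pi_norm_le_iff_of_nonneg (Real.exp_pos _).le]
      intro j
      fin_cases j
      simp only [Pi.sub_apply]
      show ‖absS X t - |x 0|‖ ≤ Real.exp (-μ)
      rw [Real.norm_eq_abs, abs_of_nonneg (by
        have h0 := abs_le_absS X t
        rw [← hX]
        linarith : (0:ℝ) ≤ absS X t - |x 0|)]
      have h4 : Real.exp (-t) ≤ Real.exp (-(μ + X^2 + 1)) := Real.exp_le_exp.2 (by linarith)
      have h5 : (X^2+1) * Real.exp (-(μ + X^2 + 1)) ≤ Real.exp (-μ) := by
        rw [show -(μ + X^2 + 1) = -(X^2+1) + -μ from by ring, Real.exp_add]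
        calc (X^2+1) * (Real.exp (-(X^2+1)) * Real.exp (-μ))
            = ((X^2+1) * Real.exp (-(X^2+1))) * Real.exp (-μ) := by ring
          _ ≤ 1 * Real.exp (-μ) :=
              mul_le_mul_of_nonneg_right (self_mul_exp_neg_le_one _) (Real.exp_pos _).le
          _ = Real.exp (-μ) := one_mul _
      calc absS X t - |x 0| ≤ |absV X t| := absS_sub_le X t
        _ ≤ (X^2+1) * Real.exp (-t) := absV_le_exp X t ht
        _ ≤ (X^2+1) * Real.exp (-(μ + X^2 + 1)) :=
            mul_le_mul_of_nonneg_left h4 (by positivity)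
        _ ≤ Real.exp (-μ) := h5
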